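/- Let N be a topological group, Γ a discrete subgroup, and P a closed subgroup such that P ∩ Γ is cocompact in P (i.e., P/(P ∩ Γ) is compact). Then PΓ is a closed subset of N. -/

import Mathlib

open Pointwise
/-- If `Γ` is a discrete subgroup of a locally compact second countable Hausdorff
topological group `N`, and `P` is a closed subgroup such that `P/(P ∩ Γ)` is compact,
then `PΓ` is closed in `N`. -/
theorem mul_closed_of_cocompact_intersection {N : Type*} [Group N] [TopologicalSpace N]
    [IsTopologicalGroup N] [LocallyCompactSpace N] [T2Space N] [SecondCountableTopology N]
    (Γ P : Subgroup N) (hΓ : DiscreteTopology Γ) (hP : IsClosed (P : Set N))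
    (hcocpt : CompactSpace (P ⧸ Γ.subgroupOf P)) :
    IsClosed ((P : Set N) * (Γ : Set N)) := by
  haveI : LocallyCompactSpace P := hP.isClosedEmbedding_subtypeVal.isInducing.locallyCompactSpace
    (by rw [Subtype.range_val]; exact hP.isLocallyClosed)
  -- find compact K ⊆ P (as set in N) with P ⊆ K * Γ
  obtain ⟨K, hKc, hKsub, hKcov⟩ :
      ∃ K : Set N, IsCompact K ∧ K ⊆ (P : Set N) ∧ (P : Set N) ⊆ K * (Γ : Set N) := by
    have hπopen : IsOpenMap (QuotientGroup.mk : P → P ⧸ Γ.subgroupOf P) :=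
      QuotientGroup.isOpenMap_coe
    choose Kf hKc hKn using fun p : P => exists_compact_mem_nhds p
    obtain ⟨s, hs⟩ := IsCompact.elim_finite_subcover (isCompact_univ (X := P ⧸ Γ.subgroupOf P))
      (fun p => QuotientGroup.mk '' interior (Kf p))
      (fun p => hπopen _ isOpen_interior)
      (by
        rintro q -
        obtain ⟨p, rfl⟩ := QuotientGroup.mk_surjective q
        exact Set.mem_iUnion.2 ⟨p, ⟨p, mem_interior_iff_mem_nhds.2 (hKn p), rfl⟩⟩)
    refine ⟨(↑) '' (⋃ p ∈ s, Kf p), ?_, ?_, ?_⟩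
    · exact (s.isCompact_biUnion (fun p _ => hKc p)).image continuous_subtype_val
    · rintro x ⟨p, -, rfl⟩; exact p.2
    · rintro x hx
      have := hs (Set.mem_univ (QuotientGroup.mk (⟨x, hx⟩ : P)))
      simp only [Set.mem_iUnion, Set.mem_image] at this
      obtain ⟨p, hps, k, hk, hkq⟩ := this
      -- mk k = mk ⟨x,hx⟩  means k⁻¹ * ⟨x,hx⟩ ∈ Γ.subgroupOf P
      rw [QuotientGroup.eq] at hkq
      refine ⟨(k : N), ⟨k, Set.mem_biUnion hps (interior_subset hk), rfl⟩,
        (k : N)⁻¹ * x, hkq, by group⟩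
  -- PΓ = KΓ
  have : (P : Set N) * (Γ : Set N) = K * (Γ : Set N) := by
    apply Set.Subset.antisymm
    · rintro _ ⟨p, hp, γ, hγ, rfl⟩
      obtain ⟨k, hk, δ, hδ, rfl⟩ := hKcov hp
      exact ⟨k, hk, δ * γ, mul_mem hδ hγ, (mul_assoc _ _ _).symm⟩
    · exact Set.mul_subset_mul_right hKsub
  rw [this]
  exact Subgroup.isClosed_of_discrete.mul_left_of_isCompact hKc
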